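/- (Corollary 3(a): population R-squared formula.) Fix an asset i and suppose: (a) there are b ∈ ℝ^N and random variables Φ_0, Φ_1, …, Φ_K on Ω with R_i = ∑_{j≠i} b_j·R_j + α_i·Φ_0 + ∑_{k=1}^K β_{i,k}·Φ_k − ∑_{j≠i} b_j·ε_j + ε_i pointwise; (b) each Φ_m equals g_m ∘ (F_1,…,F_K) for some Borel measurable g_m : ℝ^K → ℝ; (c) each ε_j is independent of the random vector (F_1,…,F_K); (d) E[ε_j] = 0 for all j; (e) E[ε_j·ε_l] = 0 for j ≠ l and E[ε_j²] = σ² > 0 for all j; (f) all the random variables involved are square-integrable. Then the population R-squared of the regression of R_i on its peers with coefficient vector b, defined as R² := 1 − Var(R_i − ∑_{j≠i} b_j·R_j)/Var(R_i), satisfies R² = 1 − [Var(α_i·Φ_0 + ∑_{k=1}^K β_{i,k}·Φ_k) + (1 + ‖b‖₂²)·σ²] / [Var(∑_{k=1}^K β_{i,k}·F_k) + σ²]; in particular, with b, σ² and Var(∑_k β_{i,k}·F_k) held fixed, R² is strictly decreasing in the factor-residual variance Var(α_i·Φ_0 + ∑_{k=1}^K β_{i,k}·Φ_k). -/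

import Mathlib

open MeasureTheory ProbabilityTheory Finset


private lemma l2_mul_integrable {Ω : Type*} [MeasurableSpace Ω] {μ : Measure Ω}
    {f g : Ω → ℝ} (hf : MemLp f 2 μ) (hg : MemLp g 2 μ) :
    Integrable (fun ω => f ω * g ω) μ := by
  have h : MemLp (f • g) 1 μ := hg.smul hf
  exact memLp_one_iff_integrable.mp h

private lemma var_const_add' {Ω : Type*} [MeasurableSpace Ω] (μ : Measure Ω)
    [IsProbabilityMeasure μ] (c : ℝ) {X : Ω → ℝ} (hX : MemLp X 2 μ) :
    variance (fun ω => c + X ω) μ = variance X μ := by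
  rw [show (fun ω => c + X ω) = (fun _ : Ω => c) + X from rfl,
    variance_eq_sub ((memLp_const c).add hX), variance_eq_sub hX]
  simp only [Pi.pow_apply, Pi.add_apply]
  have hXi : Integrable X μ := hX.integrable one_le_two
  have h1 : ∫ ω, (c + X ω) ^ 2 ∂μ
      = c ^ 2 + (2 * c * ∫ ω, X ω ∂μ + ∫ ω, X ω ^ 2 ∂μ) := by
    have : ∫ ω, (c + X ω) ^ 2 ∂μ = ∫ ω, (c ^ 2 + (2 * c * X ω + X ω ^ 2)) ∂μ := by
      apply integral_congr_ae; filter_upwards with ω; ring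
    have ha : Integrable (fun ω => 2 * c * X ω + X ω ^ 2) μ :=
      (hXi.const_mul _).add hX.integrable_sq
    rw [this, integral_add (integrable_const _) ha,
      integral_add (hXi.const_mul _) hX.integrable_sq, integral_const,
      integral_const_mul _ _]
    simp
  have h3 : ∫ ω, (c + X ω) ∂μ = c + ∫ ω, X ω ∂μ := by
    rw [integral_add (integrable_const _) hXi, integral_const]; simp
  rw [h1, h3]; ring

private lemma var_add_of_orth {Ω : Type*} [MeasurableSpace Ω] (μ : Measure Ω)
    [IsProbabilityMeasure μ] {W Z : Ω → ℝ} (hW : MemLp W 2 μ) (hZ : MemLp Z 2 μ)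
    (hZ0 : ∫ ω, Z ω ∂μ = 0) (hWZ : ∫ ω, W ω * Z ω ∂μ = 0) :
    variance (fun ω => W ω + Z ω) μ = variance W μ + ∫ ω, Z ω ^ 2 ∂μ := by
  rw [show (fun ω => W ω + Z ω) = W + Z from rfl,
    variance_eq_sub (hW.add hZ), variance_eq_sub hW]
  simp only [Pi.pow_apply, Pi.add_apply]
  have hint1 : Integrable (fun ω => W ω ^ 2) μ := hW.integrable_sq
  have hint2 : Integrable (fun ω => 2 * (W ω * Z ω)) μ :=
    (l2_mul_integrable hW hZ).const_mul 2
  have hint3 : Integrable (fun ω => Z ω ^ 2) μ := hZ.integrable_sq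
  have e1 : ∫ ω, (W ω + Z ω) ^ 2 ∂μ
      = ∫ ω, W ω ^ 2 ∂μ + (2 * ∫ ω, W ω * Z ω ∂μ + ∫ ω, Z ω ^ 2 ∂μ) := by
    have : ∫ ω, (W ω + Z ω) ^ 2 ∂μ
        = ∫ ω, (W ω ^ 2 + (2 * (W ω * Z ω) + Z ω ^ 2)) ∂μ := by
      apply integral_congr_ae; filter_upwards with ω; ring
    have ha : Integrable (fun ω => 2 * (W ω * Z ω) + Z ω ^ 2) μ := hint2.add hint3
    rw [this, integral_add hint1 ha, integral_add hint2 hint3,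
      integral_const_mul _ _]
  have e2 : ∫ ω, (W ω + Z ω) ∂μ = ∫ ω, W ω ∂μ := by
    rw [integral_add (hW.integrable one_le_two) (hZ.integrable one_le_two), hZ0, add_zero]
  rw [e1, e2, hWZ]; ring

/-- **Corollary 3(a): population R-squared formula.**
Under the assumptions of the residual variance decomposition (with `σ² > 0`), the
population R-squared `R² := 1 - Var(R i - ∑_{j≠i} b j * R j) / Var(R i)` of the
regression of `R i` on its peers with coefficient vector `b` satisfies
`R² = 1 - [Var(α i * Φ₀ + ∑ k β i k * Φ k) + (1 + ‖b‖₂²) σ²] / [Var(∑ k β i k * F k) + σ²]`;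
in particular, with `b`, `σ²` and `Var(∑ k β i k * F k)` held fixed, the map sending the
factor-residual variance `V` to `1 - (V + (1 + ‖b‖₂²) σ²) / (Var(∑ k β i k * F k) + σ²)`
is strictly decreasing. -/
theorem sarp_population_R_squared
    {Ω : Type*} [MeasurableSpace Ω] (μ : Measure Ω) [IsProbabilityMeasure μ]
    {N K : ℕ}
    (F : Fin K → Ω → ℝ)
    (α : Fin (N + 1) → ℝ) (β : Fin (N + 1) → Fin K → ℝ)
    (ε : Fin (N + 1) → Ω → ℝ) (R : Fin (N + 1) → Ω → ℝ)
    (hmodel : ∀ j ω, R j ω = α j + ∑ k, β j k * F k ω + ε j ω)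
    (i : Fin (N + 1))
    (b : Fin (N + 1) → ℝ)
    (Φ₀ : Ω → ℝ) (Φ : Fin K → Ω → ℝ)
    (σ2 : ℝ) (hσ2 : 0 < σ2)
    -- (a) the return decomposition holds pointwise
    (hdecomp : ∀ ω, R i ω
      = ∑ j ∈ Finset.univ.erase i, b j * R j ω
        + α i * Φ₀ ω
        + ∑ k, β i k * Φ k ω
        - ∑ j ∈ Finset.univ.erase i, b j * ε j ω
        + ε i ω)
    -- (b) each factor residual is a Borel-measurable function of the factor vector
    (hΦ₀_meas : ∃ g : (Fin K → ℝ) → ℝ, Measurable g ∧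
      ∀ ω, Φ₀ ω = g (fun k => F k ω))
    (hΦ_meas : ∀ k, ∃ g : (Fin K → ℝ) → ℝ, Measurable g ∧
      ∀ ω, Φ k ω = g (fun k' => F k' ω))
    -- (c) each idiosyncratic risk is independent of the factor vector
    (hindep : ∀ j, IndepFun (ε j) (fun ω => (fun k => F k ω)) μ)
    -- (d) idiosyncratic risks have mean zero
    (hε_mean : ∀ j, ∫ ω, ε j ω ∂μ = 0)
    -- (e) homoskedasticity
    (hε_orth : ∀ j l, j ≠ l → ∫ ω, ε j ω * ε l ω ∂μ = 0)
    (hε_var : ∀ j, ∫ ω, (ε j ω) ^ 2 ∂μ = σ2)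
    -- (f) square integrability of all random variables involved
    (hR_L2 : ∀ j, MemLp (R j) 2 μ)
    (hF_L2 : ∀ k, MemLp (F k) 2 μ)
    (hΦ₀_L2 : MemLp Φ₀ 2 μ)
    (hΦ_L2 : ∀ k, MemLp (Φ k) 2 μ)
    (hε_L2 : ∀ j, MemLp (ε j) 2 μ) :
    (1 - variance (fun ω => R i ω - ∑ j ∈ Finset.univ.erase i, b j * R j ω) μ
          / variance (R i) μ
      = 1 - (variance (fun ω => α i * Φ₀ ω + ∑ k, β i k * Φ k ω) μ
              + (1 + ∑ j ∈ Finset.univ.erase i, (b j) ^ 2) * σ2)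
            / (variance (fun ω => ∑ k, β i k * F k ω) μ + σ2)) ∧
    StrictAnti (fun V : ℝ =>
      1 - (V + (1 + ∑ j ∈ Finset.univ.erase i, (b j) ^ 2) * σ2)
            / (variance (fun ω => ∑ k, β i k * F k ω) μ + σ2)) := by
  classical
  -- denominator positivity
  have hden : 0 < variance (fun ω => ∑ k, β i k * F k ω) μ + σ2 :=
    add_pos_of_nonneg_of_pos (variance_nonneg _ _) hσ2
  -- L² facts
  have hG_L2 : MemLp (fun ω => α i * Φ₀ ω + ∑ k, β i k * Φ k ω) 2 μ :=
    (hΦ₀_L2.const_mul _).add (memLp_finset_sum _ fun k _ => (hΦ_L2 k).const_mul _)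
  have hS_L2 : MemLp (fun ω => ∑ k, β i k * F k ω) 2 μ :=
    memLp_finset_sum _ fun k _ => (hF_L2 k).const_mul _
  have hZ_L2 : MemLp (fun ω => ε i ω - ∑ j ∈ Finset.univ.erase i, b j * ε j ω) 2 μ :=
    (hε_L2 i).sub (memLp_finset_sum _ fun j _ => (hε_L2 j).const_mul _)
  have hεi : ∀ j, Integrable (ε j) μ := fun j => (hε_L2 j).integrable one_le_two
  have hmul_int : ∀ j l : Fin (N + 1), Integrable (fun ω => ε j ω * ε l ω) μ :=
    fun j l => l2_mul_integrable (hε_L2 j) (hε_L2 l)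
  -- cross integrals of functions of F with ε vanish
  have hcross : ∀ (g' : (Fin K → ℝ) → ℝ), Measurable g' →
      ∀ (G' : Ω → ℝ), MemLp G' 2 μ → (∀ ω, G' ω = g' (fun k => F k ω)) →
      ∀ j, ∫ ω, G' ω * ε j ω ∂μ = 0 := by
    intro g' hg' G' hG' hGeq j
    have hind : IndepFun G' (ε j) μ := by
      have h := ((hindep j).comp measurable_id hg').symm
      have heq : G' = (g' ∘ fun ω k => F k ω) := funext fun ω => hGeq ω
      rw [heq]; exact h
    have h2 := hind.integral_mul_eq_mul_integral hG'.1 (hε_L2 j).1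
    rw [hε_mean j, mul_zero] at h2
    exact h2
  -- the factor residual as a function of F
  obtain ⟨g₀, hg₀m, hg₀⟩ := hΦ₀_meas
  choose g hgm hgΦ using hΦ_meas
  have hGε : ∀ j, ∫ ω, (α i * Φ₀ ω + ∑ k, β i k * Φ k ω) * ε j ω ∂μ = 0 := by
    intro j
    refine hcross (fun x => α i * g₀ x + ∑ k, β i k * g k x)
      ((measurable_const.mul hg₀m).add
        (Finset.measurable_sum _ fun k _ => measurable_const.mul (hgm k)))
      _ hG_L2 (fun ω => ?_) j
    simp only [hg₀ ω]
    congr 1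
    exact Finset.sum_congr rfl fun k _ => by rw [hgΦ k ω]
  have hSε : ∫ ω, (∑ k, β i k * F k ω) * ε i ω ∂μ = 0 := by
    refine hcross (fun x => ∑ k, β i k * x k)
      (Finset.measurable_sum _ fun k _ => measurable_const.mul (measurable_pi_apply k))
      _ hS_L2 (fun ω => rfl) i
  -- mean of the idiosyncratic part
  have hZmean : ∫ ω, (ε i ω - ∑ j ∈ Finset.univ.erase i, b j * ε j ω) ∂μ = 0 := by
    rw [integral_sub (hεi i)
      (integrable_finset_sum _ fun j _ => (hεi j).const_mul _),
      integral_finset_sum _ fun j _ => (hεi j).const_mul _, hε_mean i]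
    simp [integral_const_mul, hε_mean]
  -- orthogonality of factor residual and idiosyncratic part
  have hGZ : ∫ ω, (α i * Φ₀ ω + ∑ k, β i k * Φ k ω)
      * (ε i ω - ∑ j ∈ Finset.univ.erase i, b j * ε j ω) ∂μ = 0 := by
    have hGe_int : ∀ j, Integrable
        (fun ω => (α i * Φ₀ ω + ∑ k, β i k * Φ k ω) * ε j ω) μ :=
      fun j => l2_mul_integrable hG_L2 (hε_L2 j)
    have key : ∫ ω, (α i * Φ₀ ω + ∑ k, β i k * Φ k ω)
        * (ε i ω - ∑ j ∈ Finset.univ.erase i, b j * ε j ω) ∂μ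
        = ∫ ω, ((α i * Φ₀ ω + ∑ k, β i k * Φ k ω) * ε i ω
          - ∑ j ∈ Finset.univ.erase i,
              b j * ((α i * Φ₀ ω + ∑ k, β i k * Φ k ω) * ε j ω)) ∂μ := by
      apply integral_congr_ae; filter_upwards with ω
      rw [mul_sub, Finset.mul_sum]
      congr 1
      exact Finset.sum_congr rfl fun j _ => by ring
    rw [key, integral_sub (hGe_int i)
      (integrable_finset_sum _ fun j _ => (hGe_int j).const_mul _),
      integral_finset_sum _ fun j _ => (hGe_int j).const_mul _, hGε i]
    simp [integral_const_mul, hGε]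
  -- second moment of the idiosyncratic part
  have hZsq : ∫ ω, (ε i ω - ∑ j ∈ Finset.univ.erase i, b j * ε j ω) ^ 2 ∂μ
      = (1 + ∑ j ∈ Finset.univ.erase i, b j ^ 2) * σ2 := by
    have key : ∀ ω, (ε i ω - ∑ j ∈ Finset.univ.erase i, b j * ε j ω) ^ 2
        = ε i ω ^ 2 - (∑ j ∈ Finset.univ.erase i, (2 * b j) * (ε i ω * ε j ω))
          + ∑ j ∈ Finset.univ.erase i, ∑ l ∈ Finset.univ.erase i,
              (b j * b l) * (ε j ω * ε l ω) := by
      intro ω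
      have h1 : (∑ j ∈ Finset.univ.erase i, b j * ε j ω)
          * (∑ l ∈ Finset.univ.erase i, b l * ε l ω)
          = ∑ j ∈ Finset.univ.erase i, ∑ l ∈ Finset.univ.erase i,
              (b j * b l) * (ε j ω * ε l ω) := by
        rw [Finset.sum_mul_sum]
        exact Finset.sum_congr rfl fun j _ =>
          Finset.sum_congr rfl fun l _ => by ring
      have h2 : 2 * ε i ω * (∑ j ∈ Finset.univ.erase i, b j * ε j ω)
          = ∑ j ∈ Finset.univ.erase i, (2 * b j) * (ε i ω * ε j ω) := by
        rw [Finset.mul_sum]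
        exact Finset.sum_congr rfl fun j _ => by ring
      rw [sub_sq, sq (∑ j ∈ Finset.univ.erase i, b j * ε j ω), h1, h2]
    have hBint : Integrable (fun ω => ∑ j ∈ Finset.univ.erase i,
        (2 * b j) * (ε i ω * ε j ω)) μ :=
      integrable_finset_sum _ fun j _ => (hmul_int i j).const_mul _
    have hCint : Integrable (fun ω => ∑ j ∈ Finset.univ.erase i,
        ∑ l ∈ Finset.univ.erase i, (b j * b l) * (ε j ω * ε l ω)) μ :=
      integrable_finset_sum _ fun j _ =>
        integrable_finset_sum _ fun l _ => (hmul_int j l).const_mul _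
    have hB : ∫ ω, ∑ j ∈ Finset.univ.erase i, (2 * b j) * (ε i ω * ε j ω) ∂μ = 0 := by
      rw [integral_finset_sum _ fun j _ => (hmul_int i j).const_mul _]
      refine Finset.sum_eq_zero fun j hj => ?_
      rw [integral_const_mul _ _, hε_orth i j (Finset.ne_of_mem_erase hj).symm, mul_zero]
    have hC : ∫ ω, ∑ j ∈ Finset.univ.erase i, ∑ l ∈ Finset.univ.erase i,
        (b j * b l) * (ε j ω * ε l ω) ∂μ
        = (∑ j ∈ Finset.univ.erase i, b j ^ 2) * σ2 := by
      rw [integral_finset_sum _ fun j _ =>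
        integrable_finset_sum _ fun l _ => (hmul_int j l).const_mul _, Finset.sum_mul]
      refine Finset.sum_congr rfl fun j hj => ?_
      rw [integral_finset_sum _ fun l _ => (hmul_int j l).const_mul _,
        Finset.sum_eq_single j]
      · have heq : ∫ a, ε j a * ε j a ∂μ = σ2 := by
          rw [← hε_var j]
          apply integral_congr_ae; filter_upwards with ω; ring
        rw [integral_const_mul _ _, heq]; ring
      · intro l hl hlj
        rw [integral_const_mul _ _, hε_orth j l (Ne.symm hlj), mul_zero]
      · intro h; exact (h hj).elim
    have hsplit : ∫ ω, (ε i ω - ∑ j ∈ Finset.univ.erase i, b j * ε j ω) ^ 2 ∂μ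
        = ∫ ω, ε i ω ^ 2 ∂μ
          - ∫ ω, ∑ j ∈ Finset.univ.erase i, (2 * b j) * (ε i ω * ε j ω) ∂μ
          + ∫ ω, ∑ j ∈ Finset.univ.erase i, ∑ l ∈ Finset.univ.erase i,
              (b j * b l) * (ε j ω * ε l ω) ∂μ := by
      have h0 : ∫ ω, (ε i ω - ∑ j ∈ Finset.univ.erase i, b j * ε j ω) ^ 2 ∂μ
          = ∫ ω, (ε i ω ^ 2 - (∑ j ∈ Finset.univ.erase i, (2 * b j) * (ε i ω * ε j ω))
            + ∑ j ∈ Finset.univ.erase i, ∑ l ∈ Finset.univ.erase i,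
              (b j * b l) * (ε j ω * ε l ω)) ∂μ := by
        apply integral_congr_ae; filter_upwards with ω; exact key ω
      have hab : Integrable (fun ω => ε i ω ^ 2
          - ∑ j ∈ Finset.univ.erase i, (2 * b j) * (ε i ω * ε j ω)) μ :=
        (hε_L2 i).integrable_sq.sub hBint
      rw [h0, integral_add hab hCint, integral_sub (hε_L2 i).integrable_sq hBint]
    rw [hsplit, hB, hC, hε_var i]; ring
  -- variance of the residual
  have hRes : variance (fun ω => R i ω - ∑ j ∈ Finset.univ.erase i, b j * R j ω) μ
      = variance (fun ω => α i * Φ₀ ω + ∑ k, β i k * Φ k ω) μ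
        + (1 + ∑ j ∈ Finset.univ.erase i, b j ^ 2) * σ2 := by
    have hfun : (fun ω => R i ω - ∑ j ∈ Finset.univ.erase i, b j * R j ω)
        = fun ω => (α i * Φ₀ ω + ∑ k, β i k * Φ k ω)
            + (ε i ω - ∑ j ∈ Finset.univ.erase i, b j * ε j ω) := by
      funext ω; have := hdecomp ω; linarith
    calc variance (fun ω => R i ω - ∑ j ∈ Finset.univ.erase i, b j * R j ω) μ
        = variance (fun ω => (α i * Φ₀ ω + ∑ k, β i k * Φ k ω)
            + (ε i ω - ∑ j ∈ Finset.univ.erase i, b j * ε j ω)) μ := by rw [hfun]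
      _ = variance (fun ω => α i * Φ₀ ω + ∑ k, β i k * Φ k ω) μ
            + ∫ ω, (ε i ω - ∑ j ∈ Finset.univ.erase i, b j * ε j ω) ^ 2 ∂μ :=
          var_add_of_orth μ hG_L2 hZ_L2 hZmean hGZ
      _ = _ := by rw [hZsq]
  -- variance of R i
  have hRi : variance (R i) μ
      = variance (fun ω => ∑ k, β i k * F k ω) μ + σ2 := by
    have hfun : R i = fun ω => α i + ((∑ k, β i k * F k ω) + ε i ω) := by
      funext ω; rw [hmodel i ω]; ring
    have hSe_L2 : MemLp (fun ω => (∑ k, β i k * F k ω) + ε i ω) 2 μ :=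
      hS_L2.add (hε_L2 i)
    calc variance (R i) μ
        = variance (fun ω => α i + ((∑ k, β i k * F k ω) + ε i ω)) μ := by rw [hfun]
      _ = variance (fun ω => (∑ k, β i k * F k ω) + ε i ω) μ :=
          var_const_add' μ _ hSe_L2
      _ = variance (fun ω => ∑ k, β i k * F k ω) μ + ∫ ω, ε i ω ^ 2 ∂μ :=
          var_add_of_orth μ hS_L2 (hε_L2 i) (hε_mean i) hSε
      _ = _ := by rw [hε_var i]
  refine ⟨by rw [hRes, hRi], ?_⟩
  intro x y hxy
  simp only
  have h : (x + (1 + ∑ j ∈ Finset.univ.erase i, b j ^ 2) * σ2)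
      / (variance (fun ω => ∑ k, β i k * F k ω) μ + σ2)
      < (y + (1 + ∑ j ∈ Finset.univ.erase i, b j ^ 2) * σ2)
      / (variance (fun ω => ∑ k, β i k * F k ω) μ + σ2) := by
    apply (div_lt_div_iff_of_pos_right hden).mpr
    linarith
  linarith
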